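/- Let q0 = 2^s, q = 2q0², and define H(T) = T·(1 + Σ_{i=0}^{s-1} T^{2^i(2q0+1)-(q0+1)}(1+T)^{2^i}) ∈ F_2[T]. Then H has degree q/2, and for every a ∈ F_q of trace 0, the element a^{2q0-1} is a root of H. -/

import Mathlib

open Polynomial

/-- With `q₀ = 2^s`, `q = 2q₀²`, the polynomial
`H(T) = T(1 + Σ_{i=0}^{s-1} T^{2^i(2q₀+1)-(q₀+1)}(1+T)^{2^i}) ∈ F₂[T]` has degree `q/2`,
and for every `a ∈ F_q` of trace `0` the element `a^{2q₀-1}` is a root of `H`. -/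
theorem stmt_2 (s : ℕ) (hs : 1 ≤ s) (q0 q : ℕ) (hq0 : q0 = 2 ^ s) (hq : q = 2 * q0 ^ 2)
    (H : Polynomial (ZMod 2))
    (hH : H = X * (1 + ∑ i ∈ Finset.range s,
      X ^ (2 ^ i * (2 * q0 + 1) - (q0 + 1)) * (1 + X) ^ (2 ^ i)))
    (F : Type*) [Field F] [Fintype F] [Algebra (ZMod 2) F]
    (hF : Fintype.card F = q) :
    H.natDegree = q / 2 ∧
    ∀ a : F, (∑ i ∈ Finset.range (2 * s + 1), a ^ (2 ^ i)) = 0 →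
      Polynomial.aeval (a ^ (2 * q0 - 1)) H = 0 := by
  have hq0ge2 : 2 ≤ q0 := by
    rw [hq0]
    calc 2 = 2 ^ 1 := rfl
    _ ≤ 2 ^ s := Nat.pow_le_pow_right (by norm_num) hs
  -- the terms of the sum
  set t : ℕ → Polynomial (ZMod 2) :=
    fun i => X ^ (2 ^ i * (2 * q0 + 1) - (q0 + 1)) * (1 + X) ^ (2 ^ i) with ht
  have honeX : (1 + X : Polynomial (ZMod 2)).Monic := by
    have := monic_X_add_C (1 : ZMod 2)
    simpa [add_comm] using this
  have hdeg_t : ∀ i, (t i).natDegree = 2 ^ i * (2 * q0 + 2) - (q0 + 1) := by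
    intro i
    have h1 : q0 + 1 ≤ 2 ^ i * (2 * q0 + 1) := by
      calc q0 + 1 ≤ 1 * (2 * q0 + 1) := by omega
      _ ≤ 2 ^ i * (2 * q0 + 1) := by
          exact Nat.mul_le_mul_right _ (Nat.one_le_two_pow)
    have h2 : ((1 + X : Polynomial (ZMod 2)) ^ 2 ^ i).natDegree = 2 ^ i := by
      rw [honeX.natDegree_pow]
      have : (1 + X : Polynomial (ZMod 2)).natDegree = 1 := by
        rw [add_comm]; simpa using natDegree_X_add_C (1 : ZMod 2)
      rw [this, mul_one]
    rw [ht]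
    rw [natDegree_mul (pow_ne_zero _ X_ne_zero) (honeX.pow _).ne_zero, natDegree_X_pow, h2]
    have h3 : 2 ^ i * (2 * q0 + 2) = 2 ^ i * (2 * q0 + 1) + 2 ^ i := by ring
    omega
  constructor
  · -- degree part
    obtain ⟨m, rfl⟩ : ∃ m, s = m + 1 := ⟨s - 1, by omega⟩
    have hNpos : q0 + 2 ≤ 2 ^ m * (2 * q0 + 2) := by
      calc q0 + 2 ≤ 1 * (2 * q0 + 2) := by omega
      _ ≤ 2 ^ m * (2 * q0 + 2) := Nat.mul_le_mul_right _ Nat.one_le_two_pow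
    have hlt : (1 + ∑ i ∈ Finset.range m, t i).natDegree < (t m).natDegree := by
      rw [hdeg_t]
      have hb : (1 + ∑ i ∈ Finset.range m, t i).natDegree ≤
          2 ^ m * (2 * q0 + 2) - (q0 + 2) := by
        apply (natDegree_add_le _ _).trans
        simp only [natDegree_one, max_le_iff]
        refine ⟨by omega, natDegree_sum_le_of_forall_le _ _ fun i hi => ?_⟩
        rw [hdeg_t]
        have him : i < m := Finset.mem_range.mp hi
        obtain ⟨k, rfl⟩ : ∃ k, m = k + 1 := ⟨m - 1, by omega⟩
        have h1 : 2 ^ i * (2 * q0 + 2) ≤ 2 ^ k * (2 * q0 + 2) :=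
          Nat.mul_le_mul_right _ (Nat.pow_le_pow_right (by norm_num) (by omega))
        have h2 : 2 ^ (k + 1) * (2 * q0 + 2) = 2 ^ k * (2 * q0 + 2) + 2 ^ k * (2 * q0 + 2) := by
          ring
        have h3 : 2 * q0 + 2 ≤ 2 ^ k * (2 * q0 + 2) :=
          Nat.le_mul_of_pos_left _ (Nat.pow_pos (by norm_num))
        omega
      omega
    have hsum : (1 + ∑ i ∈ Finset.range (m + 1), t i).natDegree = (t m).natDegree := by
      rw [Finset.sum_range_succ, ← add_assoc]
      exact natDegree_add_eq_right_of_natDegree_lt hlt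
    have hG : (1 + ∑ i ∈ Finset.range (m + 1), t i) ≠ 0 := by
      intro h0
      rw [h0, natDegree_zero, hdeg_t] at hsum
      omega
    rw [hH, natDegree_mul X_ne_zero hG, natDegree_X, hsum, hdeg_t]
    have h5 : 2 ^ m * (2 * q0 + 2) = q0 * (q0 + 1) := by
      have h6 : 2 ^ (m + 1) = q0 := hq0.symm
      calc 2 ^ m * (2 * q0 + 2) = 2 ^ (m + 1) * (q0 + 1) := by ring
      _ = q0 * (q0 + 1) := by rw [h6]
    have hq2 : q / 2 = q0 ^ 2 := by omega
    have h7 : q0 * (q0 + 1) = q0 ^ 2 + q0 := by ring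
    rw [h5, hq2]
    omega
  · -- root part
    intro a ha
    have hchar : CharP F 2 := charP_of_injective_algebraMap
      (algebraMap (ZMod 2) F).injective 2
    haveI := hchar
    by_cases haz : a = 0
    · subst haz
      have : (0 : F) ^ (2 * q0 - 1) = 0 := by
        apply zero_pow; omega
      rw [this, hH]
      simp
    -- a ≠ 0
    set b : F := a ^ (2 * q0 - 1) with hb
    have hbval : ∀ p : Polynomial (ZMod 2), aeval b (X * p) = b * aeval b p := by
      intro p; simp
    obtain ⟨m, hm⟩ : ∃ m, q0 = m + 2 := ⟨q0 - 2, by omega⟩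
    have hcard : a ^ Fintype.card F = a := FiniteField.pow_card a
    have hq' : a ^ q = a := by rw [← hF]; exact hcard
    -- key power facts
    have hb1 : b ^ (2 * q0 + 1) = a := by
      have h1 : a * b ^ (2 * q0 + 1) = a * a := by
        rw [hb, ← pow_mul, ← pow_succ']
        have he : (2 * q0 - 1) * (2 * q0 + 1) + 1 = q + q := by
          subst hm hq
          have h2 : 2 * (m + 2) - 1 = 2 * m + 3 := by omega
          rw [h2]; ring
        rw [he, pow_add, hq']
      exact mul_left_cancel₀ haz h1
    have hb2 : b ^ (q0 + 1) = a ^ q0 := by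
      rw [hb, ← pow_mul]
      have he : (2 * q0 - 1) * (q0 + 1) = q + (q0 - 1) := by
        subst hm hq
        have h2 : 2 * (m + 2) - 1 = 2 * m + 3 := by omega
        have h3 : m + 2 - 1 = m + 1 := by omega
        rw [h2, h3]; ring
      rw [he, pow_add, hq']
      have : 1 + (q0 - 1) = q0 := by omega
      calc a * a ^ (q0 - 1) = a ^ (1 + (q0 - 1)) := by rw [pow_add, pow_one]
      _ = a ^ q0 := by rw [this]
    have hbz : b ≠ 0 := by
      rw [hb]; exact pow_ne_zero _ haz
    have hab : a * b = a ^ (2 * q0) := by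
      rw [hb, ← pow_succ']
      congr 1; omega
    -- per-term identity
    have hterm : ∀ i, a ^ q0 * (b ^ (2 ^ i * (2 * q0 + 1) - (q0 + 1)) * (1 + b) ^ 2 ^ i)
        = (a + a ^ (2 * q0)) ^ 2 ^ i := by
      intro i
      have hle : q0 + 1 ≤ 2 ^ i * (2 * q0 + 1) := by
        calc q0 + 1 ≤ 1 * (2 * q0 + 1) := by omega
        _ ≤ 2 ^ i * (2 * q0 + 1) := Nat.mul_le_mul_right _ Nat.one_le_two_pow
      have hrhs : (a + a ^ (2 * q0)) ^ 2 ^ i = a ^ 2 ^ i * (1 + b) ^ 2 ^ i := by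
        rw [← mul_pow]
        congr 1
        rw [mul_add, mul_one, hab]
      rw [hrhs]
      have hkey : a ^ q0 * b ^ (2 ^ i * (2 * q0 + 1) - (q0 + 1)) = a ^ 2 ^ i := by
        have hc : b ^ (q0 + 1) ≠ 0 := pow_ne_zero _ hbz
        apply mul_right_cancel₀ hc
        rw [mul_assoc, ← pow_add, Nat.sub_add_cancel hle, mul_comm (2 ^ i), pow_mul, hb1,
          hb2]
        ring
      rw [← mul_assoc, hkey]
    -- trace computation
    have h2q0 : 2 * q0 = 2 ^ (s + 1) := by rw [hq0, pow_succ]; ring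
    have htr : ∑ i ∈ Finset.range s, (a + a ^ (2 * q0)) ^ 2 ^ i = a ^ q0 := by
      have hX : ∀ i, (a + a ^ (2 * q0)) ^ 2 ^ i = a ^ 2 ^ i + a ^ 2 ^ (s + 1 + i) := by
        intro i
        rw [add_pow_char_pow]
        congr 1
        rw [← pow_mul, h2q0, ← pow_add]
      simp only [hX]
      rw [Finset.sum_add_distrib]
      have hsplit : (2 : ℕ) * s + 1 = (s + 1) + s := by omega
      rw [hsplit, Finset.sum_range_add, Finset.sum_range_succ] at ha
      have hself : a ^ 2 ^ s + a ^ 2 ^ s = 0 := CharTwo.add_self_eq_zero _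
      have hq0s : a ^ q0 = a ^ 2 ^ s := by rw [hq0]
      rw [hq0s]
      linear_combination ha - hself
    -- conclude
    rw [hH, hbval]
    have hGz : (1 : F) + ∑ i ∈ Finset.range s,
        b ^ (2 ^ i * (2 * q0 + 1) - (q0 + 1)) * (1 + b) ^ 2 ^ i = 0 := by
      have haq0 : (a : F) ^ q0 ≠ 0 := pow_ne_zero _ haz
      apply mul_left_cancel₀ haq0
      rw [mul_add, mul_one, Finset.mul_sum, mul_zero]
      simp only [hterm]
      rw [htr]
      exact CharTwo.add_self_eq_zero _
    have : aeval b (1 + ∑ i ∈ Finset.range s, t i) = 0 := by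
      rw [ht]
      simp only [map_add, map_one, map_sum, map_mul, map_pow, aeval_X]
      exact hGz
    rw [this, mul_zero]
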